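/- Both the triangular prism and K_{3,3} have diameter 2, and for every K ≥ 2 and every vertex v of either graph the K-hop shortest-path-distance node configuration equals (3, 2, 0, ..., 0). Moreover, for every K ≥ 1 and every iteration l, the K-hop shortest-path-distance color refinement assigns the same color to every vertex of the triangular prism and every vertex of K_{3,3}; consequently, no K-hop message passing GNN with the shortest-path-distance kernel and constant initial node features can distinguish the triangular prism from K_{3,3}, even though the two graphs are not isomorphic. -/

import Mathlib

/-!
STATEMENT 14: The triangular prism and K_{3,3} both have diameter 2 and identical
K-hop spd node configurations (3, 2, 0, …, 0) at every vertex; K-hop spd color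
refinement gives all vertices of both graphs the same color at every iteration, and
consequently no K-hop message passing GNN with the spd kernel and constant initial
features can distinguish the two (non-isomorphic) graphs.
-/

namespace KHopStmt14

/-- The triangular prism `K₃ □ K₂` on `Fin 6`: the triangles `{0,1,2}` and `{3,4,5}`
(equal `i/3`) joined by the perfect matching `(0,3), (1,4), (2,5)` (equal `i % 3`). -/
def prism : SimpleGraph (Fin 6) :=
  SimpleGraph.fromRel fun i j => i.val / 3 = j.val / 3 ∨ i.val % 3 = j.val % 3

/-- The complete bipartite graph `K_{3,3}` on `Fin 6`, with parts the even and the odd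
vertices. -/
def K33 : SimpleGraph (Fin 6) :=
  SimpleGraph.fromRel fun i j => i.val % 2 ≠ j.val % 2

/-- k-th hop neighbors under the shortest-path-distance kernel: vertices at graph
distance exactly `k` from `v`. -/
noncomputable def Qspd {V : Type*} [Fintype V] (G : SimpleGraph V) (v : V) (k : ℕ) :
    Finset V := by
  classical
  exact Finset.univ.filter fun u => G.Reachable v u ∧ G.dist v u = k

/-- The K-hop spd node configuration `A^{K,spd}_{v,G} = (|Q^1|, ..., |Q^K|)`. -/
noncomputable def config {V : Type*} [Fintype V] (K : ℕ) (G : SimpleGraph V) (v : V) :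
    List ℕ :=
  (List.range K).map fun i => (Qspd G v (i + 1)).card

/-- K-hop color refinement with the spd kernel: all vertices share the constant initial
color, and `c_{l+1}(v) = (c_l(v), ({{c_l(u) : u ∈ Q^{k,spd}_v}})_{k=1,…,K})`. -/
def KhopEquiv {V1 V2 : Type*} [Fintype V1] [Fintype V2] (K : ℕ)
    (G1 : SimpleGraph V1) (G2 : SimpleGraph V2) : ℕ → V1 → V2 → Prop
  | 0, _, _ => True
  | (l + 1), v, u => KhopEquiv K G1 G2 l v u ∧
      ∀ k : ℕ, 1 ≤ k → k ≤ K →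
        ∃ σ : {w // w ∈ Qspd G1 v k} ≃ {w // w ∈ Qspd G2 u k},
          ∀ w : {w // w ∈ Qspd G1 v k}, KhopEquiv K G1 G2 l w.1 (σ w).1

/-- Node features of a K-hop message passing GNN with the spd kernel and constant
initial features `h0` (arbitrary message, update and combine functions). -/
noncomputable def gnnFeat {V : Type*} [Fintype V] (K : ℕ)
    {H M : Type} (h0 : H) (MES : ℕ → ℕ → Multiset H → M)
    (UPD : ℕ → ℕ → M → H → H) (COMB : ℕ → Multiset H → H)
    (G : SimpleGraph V) : ℕ → V → H
  | 0, _ => h0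
  | (l + 1), v =>
      COMB (l + 1)
        (((List.range K).map fun k =>
            UPD (l + 1) (k + 1)
              (MES (l + 1) (k + 1)
                ((Qspd G v (k + 1)).val.map (gnnFeat K h0 MES UPD COMB G l)))
              (gnnFeat K h0 MES UPD COMB G l v) : List H) : Multiset H)

/-- Graph representation: `h_G = READOUT {{h^L_v : v ∈ V}}`. -/
noncomputable def gnnGraphRep {V : Type*} [Fintype V] (K : ℕ)
    {H M B : Type} (h0 : H) (MES : ℕ → ℕ → Multiset H → M)
    (UPD : ℕ → ℕ → M → H → H) (COMB : ℕ → Multiset H → H)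
    (READOUT : Multiset H → B) (G : SimpleGraph V) (L : ℕ) : B :=
  READOUT (Finset.univ.val.map (gnnFeat K h0 MES UPD COMB G L))


section Aux
open SimpleGraph Finset

instance instDecPrism : DecidableRel prism.Adj := fun a b =>
  decidable_of_iff _ (SimpleGraph.fromRel_adj _ a b).symm

instance instDecK33 : DecidableRel K33.Adj := fun a b =>
  decidable_of_iff _ (SimpleGraph.fromRel_adj _ a b).symm

lemma edist_two {V : Type*} {G : SimpleGraph V} {v u w : V} (hne : v ≠ u)
    (hna : ¬G.Adj v u) (h1 : G.Adj v w) (h2 : G.Adj w u) : G.edist v u = 2 := by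
  have hle : G.edist v u ≤ 2 := by
    have := SimpleGraph.Walk.edist_le (h1.toWalk.append h2.toWalk)
    simpa using this
  have h0 : G.edist v u ≠ 0 := by
    simp only [ne_eq, SimpleGraph.edist_eq_zero_iff]; exact hne
  have h1' : G.edist v u ≠ 1 := by
    simp only [ne_eq, SimpleGraph.edist_eq_one_iff_adj]; exact hna
  have h2' : (2 : ℕ∞) ≤ G.edist v u := by
    have hlt : (1 : ℕ∞) < G.edist v u :=
      lt_of_le_of_ne (ENat.one_le_iff_ne_zero.mpr h0) (Ne.symm h1')
    have := Order.add_one_le_of_lt hlt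
    norm_num at this ⊢; exact this
  exact le_antisymm hle h2'

variable {G : SimpleGraph (Fin 6)} [DecidableRel G.Adj]

lemma edist_formula
    (hcom : ∀ v u : Fin 6, v ≠ u → ¬G.Adj v u → ∃ w, G.Adj v w ∧ G.Adj w u)
    (v u : Fin 6) :
    G.edist v u = if v = u then 0 else if G.Adj v u then 1 else 2 := by
  split_ifs with h1 h2
  · subst h1; exact SimpleGraph.edist_self
  · exact SimpleGraph.edist_eq_one_iff_adj.mpr h2
  · obtain ⟨w, hw1, hw2⟩ := hcom v u h1 h2
    exact edist_two h1 h2 hw1 hw2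

lemma reach_all
    (hcom : ∀ v u : Fin 6, v ≠ u → ¬G.Adj v u → ∃ w, G.Adj v w ∧ G.Adj w u)
    (v u : Fin 6) : G.Reachable v u := by
  apply SimpleGraph.reachable_of_edist_ne_top
  rw [edist_formula hcom]
  split_ifs <;> simp

lemma dist_formula
    (hcom : ∀ v u : Fin 6, v ≠ u → ¬G.Adj v u → ∃ w, G.Adj v w ∧ G.Adj w u)
    (v u : Fin 6) :
    G.dist v u = if v = u then 0 else if G.Adj v u then 1 else 2 := by
  have : G.dist v u = (G.edist v u).toNat := rfl
  rw [this, edist_formula hcom]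
  split_ifs <;> rfl

lemma mem_Qspd
    (hcom : ∀ v u : Fin 6, v ≠ u → ¬G.Adj v u → ∃ w, G.Adj v w ∧ G.Adj w u)
    (v u : Fin 6) (k : ℕ) :
    u ∈ Qspd G v k ↔ (if v = u then 0 else if G.Adj v u then 1 else 2) = k := by
  simp only [Qspd, mem_filter, mem_univ, true_and]
  rw [← dist_formula hcom v u]
  exact ⟨fun h => h.2, fun h => ⟨reach_all hcom v u, h⟩⟩

lemma Qspd_one
    (hcom : ∀ v u : Fin 6, v ≠ u → ¬G.Adj v u → ∃ w, G.Adj v w ∧ G.Adj w u)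
    (v : Fin 6) : Qspd G v 1 = univ.filter (fun u => G.Adj v u) := by
  ext u
  rw [mem_Qspd hcom, mem_filter]
  simp only [mem_univ, true_and]
  split_ifs with h1 h2
  · subst h1; simp [G.irrefl]
  · simp [h2]
  · simp [h2]

lemma Qspd_two
    (hcom : ∀ v u : Fin 6, v ≠ u → ¬G.Adj v u → ∃ w, G.Adj v w ∧ G.Adj w u)
    (v : Fin 6) : Qspd G v 2 = univ.filter (fun u => ¬v = u ∧ ¬G.Adj v u) := by
  ext u
  rw [mem_Qspd hcom, mem_filter]
  simp only [mem_univ, true_and]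
  split_ifs with h1 h2 <;> simp_all

lemma Qspd_ge3
    (hcom : ∀ v u : Fin 6, v ≠ u → ¬G.Adj v u → ∃ w, G.Adj v w ∧ G.Adj w u)
    (v : Fin 6) (k : ℕ) (hk : 3 ≤ k) : Qspd G v k = ∅ := by
  ext u
  rw [mem_Qspd hcom]
  simp only [Finset.notMem_empty, iff_false]
  split_ifs <;> omega

lemma hcomP :
    ∀ v u : Fin 6, v ≠ u → ¬prism.Adj v u → ∃ w, prism.Adj v w ∧ prism.Adj w u := by
  decide

lemma hcomK :
    ∀ v u : Fin 6, v ≠ u → ¬K33.Adj v u → ∃ w, K33.Adj v w ∧ K33.Adj w u := by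
  decide

/-- The common cardinality pattern of the k-hop neighborhoods. -/
def cardFun : ℕ → ℕ := fun k => if k = 1 then 3 else if k = 2 then 2 else 0

lemma cardP : ∀ (v : Fin 6) (k : ℕ), 1 ≤ k → (Qspd prism v k).card = cardFun k := by
  intro v k hk
  match k, hk with
  | 1, _ =>
    rw [Qspd_one hcomP]
    exact (by decide : ∀ v : Fin 6, (univ.filter (fun u => prism.Adj v u)).card = 3) v
  | 2, _ =>
    rw [Qspd_two hcomP]
    exact (by decide : ∀ v : Fin 6,
      (univ.filter (fun u => ¬v = u ∧ ¬prism.Adj v u)).card = 2) v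
  | (n+3), _ =>
    rw [Qspd_ge3 hcomP v _ (by omega)]
    simp [cardFun]

lemma cardK : ∀ (v : Fin 6) (k : ℕ), 1 ≤ k → (Qspd K33 v k).card = cardFun k := by
  intro v k hk
  match k, hk with
  | 1, _ =>
    rw [Qspd_one hcomK]
    exact (by decide : ∀ v : Fin 6, (univ.filter (fun u => K33.Adj v u)).card = 3) v
  | 2, _ =>
    rw [Qspd_two hcomK]
    exact (by decide : ∀ v : Fin 6,
      (univ.filter (fun u => ¬v = u ∧ ¬K33.Adj v u)).card = 2) v
  | (n+3), _ =>
    rw [Qspd_ge3 hcomK v _ (by omega)]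
    simp [cardFun]

lemma diamP : prism.diam = 2 := by
  have he : prism.ediam = 2 := by
    apply le_antisymm
    · apply SimpleGraph.ediam_le_of_edist_le
      intro u v
      rw [edist_formula hcomP]
      split_ifs <;> norm_num
    · have h : prism.edist 0 4 = 2 := by
        rw [edist_formula hcomP]
        rw [if_neg (by decide), if_neg (by decide)]
      calc (2 : ℕ∞) = prism.edist 0 4 := h.symm
        _ ≤ prism.ediam := SimpleGraph.edist_le_ediam
  rw [SimpleGraph.diam, he]; rfl

lemma diamK : K33.diam = 2 := by
  have he : K33.ediam = 2 := by
    apply le_antisymm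
    · apply SimpleGraph.ediam_le_of_edist_le
      intro u v
      rw [edist_formula hcomK]
      split_ifs <;> norm_num
    · have h : K33.edist 0 2 = 2 := by
        rw [edist_formula hcomK]
        rw [if_neg (by decide), if_neg (by decide)]
      calc (2 : ℕ∞) = K33.edist 0 2 := h.symm
        _ ≤ K33.ediam := SimpleGraph.edist_le_ediam
  rw [SimpleGraph.diam, he]; rfl

lemma list_helper (f : ℕ → ℕ) (h0 : f 0 = 3) (h1 : f 1 = 2) (h2 : ∀ i, f (i + 2) = 0) :
    ∀ n, (List.range (n + 2)).map f = 3 :: 2 :: List.replicate n 0 := by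
  intro n
  induction n with
  | zero => simp [List.range_succ, h0, h1]
  | succ n ih =>
    rw [show n + 1 + 2 = (n + 2) + 1 by ring, List.range_succ, List.map_append, ih,
      List.replicate_succ' (n := n) (a := 0)]
    simp [h2]

lemma config_eq {G : SimpleGraph (Fin 6)}
    (hG : ∀ (v : Fin 6) (k : ℕ), 1 ≤ k → (Qspd G v k).card = cardFun k) (K : ℕ)
    (hK : 2 ≤ K) (v : Fin 6) :
    config K G v = 3 :: 2 :: List.replicate (K - 2) 0 := by
  obtain ⟨m, rfl⟩ : ∃ m, K = m + 2 := ⟨K - 2, by omega⟩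
  unfold config
  rw [list_helper (fun i => (Qspd G v (i + 1)).card) ?_ ?_ ?_ m]
  · simp
  · show (Qspd G v (0 + 1)).card = 3
    rw [hG v (0 + 1) le_rfl]; rfl
  · show (Qspd G v (1 + 1)).card = 2
    rw [hG v (1 + 1) (by omega)]; rfl
  · intro i
    show (Qspd G v (i + 2 + 1)).card = 0
    rw [hG v (i + 2 + 1) (by omega)]
    simp [cardFun]

lemma khop_all (K l : ℕ) : ∀ v u : Fin 6, KhopEquiv K prism K33 l v u := by
  induction l with
  | zero => intro v u; trivial
  | succ l ih =>
    intro v u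
    refine ⟨ih v u, fun k hk1 _ => ?_⟩
    have hc : Fintype.card {w // w ∈ Qspd prism v k} =
        Fintype.card {w // w ∈ Qspd K33 u k} := by
      rw [Fintype.card_coe, Fintype.card_coe, cardP v k hk1, cardK u k hk1]
    exact ⟨Fintype.equivOfCardEq hc, fun w => ih _ _⟩

lemma feat_const (K : ℕ) {H M : Type} (h0 : H) (MES : ℕ → ℕ → Multiset H → M)
    (UPD : ℕ → ℕ → M → H → H) (COMB : ℕ → Multiset H → H) :
    ∀ l : ℕ, ∃ c : H, (∀ v, gnnFeat K h0 MES UPD COMB prism l v = c) ∧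
      (∀ u, gnnFeat K h0 MES UPD COMB K33 l u = c) := by
  intro l
  induction l with
  | zero => exact ⟨h0, fun _ => rfl, fun _ => rfl⟩
  | succ l ih =>
    obtain ⟨c, hp, hk⟩ := ih
    have key : ∀ (G : SimpleGraph (Fin 6))
        (hG : ∀ (v : Fin 6) (k : ℕ), 1 ≤ k → (Qspd G v k).card = cardFun k)
        (hc : ∀ v, gnnFeat K h0 MES UPD COMB G l v = c) (v : Fin 6),
        gnnFeat K h0 MES UPD COMB G (l + 1) v =
          COMB (l + 1) (((List.range K).map fun k =>
            UPD (l + 1) (k + 1)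
              (MES (l + 1) (k + 1) (Multiset.replicate (cardFun (k + 1)) c)) c :
            List H)) := by
      intro G hG hc v
      rw [gnnFeat]
      congr 2
      apply List.map_congr_left
      intro k _
      rw [hc v]
      congr 2
      have h1 : (Qspd G v (k + 1)).val.map (gnnFeat K h0 MES UPD COMB G l) =
          (Qspd G v (k + 1)).val.map (fun _ => c) :=
        Multiset.map_congr rfl (fun x _ => hc x)
      rw [h1, Multiset.map_const']
      congr 1
      exact hG v (k + 1) (by omega)
    exact ⟨_, fun v => key prism cardP hp v, fun u => key K33 cardK hk u⟩

lemma tri_free : ∀ a b c : Fin 6, K33.Adj a b → K33.Adj a c → K33.Adj b c → False := by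
  decide

end Aux

/-- The prism and `K_{3,3}` both have diameter 2; for every `K ≥ 2`
every vertex of either graph has K-hop spd node configuration `(3, 2, 0, …, 0)`; K-hop
spd color refinement assigns equal colors to all vertices of the two graphs at every
iteration; consequently every K-hop message passing GNN with the spd kernel and
constant initial node features produces equal graph representations — although the two
graphs are not isomorphic. -/
theorem khop_spd_cannot_distinguish_prism_K33 :
    prism.diam = 2 ∧ K33.diam = 2 ∧
    (∀ K : ℕ, 2 ≤ K → ∀ v : Fin 6,
      config K prism v = 3 :: 2 :: List.replicate (K - 2) 0 ∧
      config K K33 v = 3 :: 2 :: List.replicate (K - 2) 0) ∧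
    (∀ K : ℕ, 1 ≤ K → ∀ (l : ℕ) (v u : Fin 6), KhopEquiv K prism K33 l v u) ∧
    (∀ (K L : ℕ) {H M B : Type} (h0 : H) (MES : ℕ → ℕ → Multiset H → M)
        (UPD : ℕ → ℕ → M → H → H) (COMB : ℕ → Multiset H → H)
        (READOUT : Multiset H → B),
        gnnGraphRep K h0 MES UPD COMB READOUT prism L =
          gnnGraphRep K h0 MES UPD COMB READOUT K33 L) ∧
    IsEmpty (prism ≃g K33) := by
  refine ⟨diamP, diamK, fun K hK v => ⟨config_eq cardP K hK v, config_eq cardK K hK v⟩,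
    fun K _ l v u => khop_all K l v u, ?_, ?_⟩
  · intro K L H M B h0 MES UPD COMB READOUT
    obtain ⟨c, hp, hk⟩ := feat_const K h0 MES UPD COMB L
    unfold gnnGraphRep
    congr 1
    rw [Multiset.map_congr rfl (fun x _ => hp x), Multiset.map_congr rfl (fun x _ => hk x)]
  · exact ⟨fun φ => tri_free (φ 0) (φ 1) (φ 2) (φ.map_adj_iff.mpr (by decide))
      (φ.map_adj_iff.mpr (by decide)) (φ.map_adj_iff.mpr (by decide))⟩

end KHopStmt14
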